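/- For θ ≥ 0 with m the unique integer satisfying m − 1/2 ≤ θ < m + 1/2, the sum l_D^θ = l_2^θ + span{e_1, …, e_m} is a direct sum; that is, if x ∈ l_2^θ and complex numbers c_1, …, c_m satisfy x + Σ_{k=1}^m c_k e_k = 0 as sequences, then x = 0 and all c_k = 0. -/

import Mathlib

/-- The sum `l_D^θ = l_2^θ ⊕ span{e_1,…,e_m}` is direct: if `x ∈ l_2^θ` and
`x + ∑_{j=1}^m c_j e_j = 0` as sequences, then `x = 0` and all `c_j = 0`.
Here `m` is the unique integer with `m - 1/2 ≤ θ < m + 1/2`, and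
`(e_p)_k = k^{-p}` when `k ≡ p (mod 2)`, `0` otherwise. -/
theorem stmt2 (θ : ℝ) (hθ : 0 ≤ θ) (m : ℕ) (hm1 : (m : ℝ) - 1 / 2 ≤ θ)
    (hm2 : θ < (m : ℝ) + 1 / 2)
    (x : ℕ+ → ℂ)
    (hx : Summable (fun k : ℕ+ => ‖x k‖ ^ 2 * (k : ℝ) ^ (2 * θ)))
    (c : Fin m → ℂ)
    (hsum : ∀ k : ℕ+,
      x k + ∑ j : Fin m,
        c j * (if (k : ℕ) % 2 = ((j : ℕ) + 1) % 2
          then ((k : ℝ) ^ (-(((j : ℕ) + 1 : ℕ) : ℝ)) : ℝ) else 0) = 0) :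
    (∀ k, x k = 0) ∧ ∀ j, c j = 0 := by
  suffices hc : ∀ j, c j = 0 by
    refine ⟨fun k => ?_, hc⟩
    have h := hsum k
    simpa [hc] using h
  by_contra hcon
  push_neg at hcon
  obtain ⟨j₀, hj₀⟩ := hcon
  set r : ℕ := ((j₀ : ℕ) + 1) % 2 with hr
  have hr2 : r < 2 := Nat.mod_lt _ (by norm_num)
  set T : Finset (Fin m) :=
    Finset.univ.filter (fun j => c j ≠ 0 ∧ ((j : ℕ) + 1) % 2 = r) with hT
  have hTne : T.Nonempty := ⟨j₀, by simp [hT, hj₀, hr]⟩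
  obtain ⟨p, hpT, hpmin⟩ := T.exists_min_image (fun j => (j : ℕ)) hTne
  have hpmin' : ∀ j ∈ T, (p : ℕ) ≤ (j : ℕ) := hpmin
  rw [hT, Finset.mem_filter] at hpT
  have hcp : c p ≠ 0 := hpT.2.1
  have hpr : ((p : ℕ) + 1) % 2 = r := hpT.2.2
  have hcp0 : (0 : ℝ) < ‖c p‖ := norm_pos_iff.mpr hcp
  set M : ℝ := ∑ j, ‖c j‖ with hM
  have hM0 : 0 ≤ M := Finset.sum_nonneg fun j _ => norm_nonneg _
  -- Pointwise lower bound on ‖x k‖ for k in the parity class of p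
  have key : ∀ k : ℕ+, (k : ℕ) % 2 = r →
      ‖c p‖ * (k : ℝ) ^ (-(((p : ℕ) + 1 : ℕ) : ℝ))
        - M * (k : ℝ) ^ (-(((p : ℕ) + 2 : ℕ) : ℝ)) ≤ ‖x k‖ := by
    intro k hk
    have hk1 : (1 : ℝ) ≤ (k : ℝ) := by exact_mod_cast k.one_le
    have hk0 : (0 : ℝ) < (k : ℝ) := lt_of_lt_of_le one_pos hk1
    set g : Fin m → ℂ := fun j =>
      c j * (((if (k : ℕ) % 2 = ((j : ℕ) + 1) % 2
        then ((k : ℝ) ^ (-(((j : ℕ) + 1 : ℕ) : ℝ))) else 0 : ℝ)) : ℂ) with hg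
    have hsk : x k = -∑ j, g j := eq_neg_of_add_eq_zero_left (hsum k)
    have hsplit : g p + ∑ j ∈ Finset.univ.erase p, g j = ∑ j, g j :=
      Finset.add_sum_erase _ g (Finset.mem_univ p)
    have hgp : ‖g p‖ = ‖c p‖ * (k : ℝ) ^ (-(((p : ℕ) + 1 : ℕ) : ℝ)) := by
      rw [hg]
      simp only [if_pos (hk.trans hpr.symm)]
      rw [norm_mul, Complex.norm_real, Real.norm_of_nonneg (Real.rpow_nonneg hk0.le _)]
      
    have hterm : ∀ j ∈ Finset.univ.erase p,
        ‖g j‖ ≤ ‖c j‖ * (k : ℝ) ^ (-(((p : ℕ) + 2 : ℕ) : ℝ)) := by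
      intro j hj
      have hjp : j ≠ p := Finset.ne_of_mem_erase hj
      by_cases hpar : (k : ℕ) % 2 = ((j : ℕ) + 1) % 2
      · by_cases hcj : c j = 0
        · simp only [hg, hcj, zero_mul, norm_zero]
          positivity
        · have hjT : j ∈ T := by
            rw [hT, Finset.mem_filter]
            exact ⟨Finset.mem_univ _, hcj, hpar.symm.trans hk⟩
          have hle : (p : ℕ) ≤ (j : ℕ) := hpmin' j hjT
          have hlt : (p : ℕ) < (j : ℕ) :=
            lt_of_le_of_ne hle (fun h => hjp (Fin.ext h.symm))
          have hexp : (-(((j : ℕ) + 1 : ℕ) : ℝ)) ≤ (-(((p : ℕ) + 2 : ℕ) : ℝ)) := by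
            have : ((p : ℕ) : ℝ) + 1 ≤ ((j : ℕ) : ℝ) := by exact_mod_cast hlt
            push_cast
            linarith
          have hrle : (k : ℝ) ^ (-(((j : ℕ) + 1 : ℕ) : ℝ))
              ≤ (k : ℝ) ^ (-(((p : ℕ) + 2 : ℕ) : ℝ)) :=
            Real.rpow_le_rpow_of_exponent_le hk1 hexp
          rw [hg]
          simp only [if_pos hpar]
          rw [norm_mul, Complex.norm_real, Real.norm_of_nonneg (Real.rpow_nonneg hk0.le _)]
          exact mul_le_mul_of_nonneg_left hrle (norm_nonneg _)
      · simp only [hg, if_neg hpar, Complex.ofReal_zero, mul_zero, norm_zero]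
        positivity
    have hsum_bound : ‖∑ j ∈ Finset.univ.erase p, g j‖
        ≤ M * (k : ℝ) ^ (-(((p : ℕ) + 2 : ℕ) : ℝ)) := by
      calc ‖∑ j ∈ Finset.univ.erase p, g j‖
          ≤ ∑ j ∈ Finset.univ.erase p, ‖g j‖ := norm_sum_le _ _
        _ ≤ ∑ j ∈ Finset.univ.erase p, ‖c j‖ * (k : ℝ) ^ (-(((p : ℕ) + 2 : ℕ) : ℝ)) :=
            Finset.sum_le_sum hterm
        _ = (∑ j ∈ Finset.univ.erase p, ‖c j‖) * (k : ℝ) ^ (-(((p : ℕ) + 2 : ℕ) : ℝ)) := by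
            rw [Finset.sum_mul]
        _ ≤ M * (k : ℝ) ^ (-(((p : ℕ) + 2 : ℕ) : ℝ)) := by
            apply mul_le_mul_of_nonneg_right _ (Real.rpow_nonneg hk0.le _)
            exact Finset.sum_le_sum_of_subset_of_nonneg (Finset.erase_subset _ _)
              (fun j _ _ => norm_nonneg _)
    have htri : ‖g p‖ ≤ ‖∑ j, g j‖ + ‖∑ j ∈ Finset.univ.erase p, g j‖ := by
      have he : g p = (∑ j, g j) - (∑ j ∈ Finset.univ.erase p, g j) := by
        rw [← hsplit]; ring
      rw [he]
      exact norm_sub_le _ _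
    have hxn : ‖x k‖ = ‖∑ j, g j‖ := by rw [hsk, norm_neg]
    rw [hxn]
    rw [hgp] at htri
    linarith
  -- Second bound: for large k in the parity class, f k ≥ C / k
  have key2 : ∀ k : ℕ+, (k : ℕ) % 2 = r → 2 * M / ‖c p‖ ≤ (k : ℝ) →
      (‖c p‖ / 2) ^ 2 * ((k : ℝ))⁻¹ ≤ ‖x k‖ ^ 2 * (k : ℝ) ^ (2 * θ) := by
    intro k hk hkK
    have hk1 : (1 : ℝ) ≤ (k : ℝ) := by exact_mod_cast k.one_le
    have hk0 : (0 : ℝ) < (k : ℝ) := lt_of_lt_of_le one_pos hk1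
    have hlow := key k hk
    have h2 : M * (k : ℝ) ^ (-(((p : ℕ) + 2 : ℕ) : ℝ))
        ≤ (‖c p‖ / 2) * (k : ℝ) ^ (-(((p : ℕ) + 1 : ℕ) : ℝ)) := by
      have e1 : (k : ℝ) ^ (-(((p : ℕ) + 2 : ℕ) : ℝ))
          = (k : ℝ)⁻¹ * (k : ℝ) ^ (-(((p : ℕ) + 1 : ℕ) : ℝ)) := by
        rw [← Real.rpow_neg_one, ← Real.rpow_add hk0]
        push_cast
        ring_nf
      rw [e1, ← mul_assoc]
      apply mul_le_mul_of_nonneg_right _ (Real.rpow_nonneg hk0.le _)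
      have hM2 : 2 * M ≤ ‖c p‖ * (k : ℝ) := by
        rw [div_le_iff₀ hcp0] at hkK
        linarith
      rw [mul_inv_le_iff₀ hk0]
      linarith
    have h3 : (‖c p‖ / 2) * (k : ℝ) ^ (-(((p : ℕ) + 1 : ℕ) : ℝ)) ≤ ‖x k‖ := by linarith
    have h4 : ((‖c p‖ / 2) * (k : ℝ) ^ (-(((p : ℕ) + 1 : ℕ) : ℝ))) ^ 2 ≤ ‖x k‖ ^ 2 :=
      pow_le_pow_left₀ (by positivity) h3 2
    have h5 : (‖c p‖ / 2) ^ 2 * ((k : ℝ))⁻¹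
        ≤ ((‖c p‖ / 2) * (k : ℝ) ^ (-(((p : ℕ) + 1 : ℕ) : ℝ))) ^ 2 * (k : ℝ) ^ (2 * θ) := by
      have e2 : ((‖c p‖ / 2) * (k : ℝ) ^ (-(((p : ℕ) + 1 : ℕ) : ℝ))) ^ 2 * (k : ℝ) ^ (2 * θ)
          = (‖c p‖ / 2) ^ 2 * (k : ℝ) ^ ((-(((p : ℕ) + 1 : ℕ) : ℝ)) * 2 + 2 * θ) := by
        rw [mul_pow, ← Real.rpow_natCast ((k : ℝ) ^ (-(((p : ℕ) + 1 : ℕ) : ℝ))) 2,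
          ← Real.rpow_mul hk0.le, Real.rpow_add hk0]
        push_cast
        ring
      rw [e2]
      apply mul_le_mul_of_nonneg_left _ (by positivity)
      have hpm : ((p : ℕ) : ℝ) + 1 ≤ (m : ℝ) := by exact_mod_cast p.isLt
      have hexp : (-1 : ℝ) ≤ (-(((p : ℕ) + 1 : ℕ) : ℝ)) * 2 + 2 * θ := by
        push_cast
        linarith
      calc ((k : ℝ))⁻¹ = (k : ℝ) ^ (-1 : ℝ) := (Real.rpow_neg_one _).symm
        _ ≤ (k : ℝ) ^ ((-(((p : ℕ) + 1 : ℕ) : ℝ)) * 2 + 2 * θ) :=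
            Real.rpow_le_rpow_of_exponent_le hk1 hexp
    calc (‖c p‖ / 2) ^ 2 * ((k : ℝ))⁻¹
        ≤ ((‖c p‖ / 2) * (k : ℝ) ^ (-(((p : ℕ) + 1 : ℕ) : ℝ))) ^ 2 * (k : ℝ) ^ (2 * θ) := h5
      _ ≤ ‖x k‖ ^ 2 * (k : ℝ) ^ (2 * θ) := by
          apply mul_le_mul_of_nonneg_right h4 (Real.rpow_nonneg hk0.le _)
  -- Build the divergent subsequence
  set K : ℕ := ⌈2 * M / ‖c p‖⌉₊ with hK
  set B : ℕ := 2 * K + r + 2 with hB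
  have hBpos : ∀ n : ℕ, 0 < 2 * n + B := by intro n; omega
  set ι : ℕ → ℕ+ := fun n => ⟨2 * n + B, hBpos n⟩ with hι
  have hιinj : Function.Injective ι := by
    intro a b hab
    have : 2 * a + B = 2 * b + B := congrArg (fun k : ℕ+ => (k : ℕ)) hab
    omega
  have hιr : ∀ n : ℕ, ((ι n : ℕ+) : ℕ) % 2 = r := by
    intro n
    show (2 * n + B) % 2 = r
    omega
  have hιK : ∀ n : ℕ, 2 * M / ‖c p‖ ≤ ((ι n : ℕ+) : ℝ) := by
    intro n
    have h1 : 2 * M / ‖c p‖ ≤ (K : ℝ) := Nat.le_ceil _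
    have h2 : (K : ℝ) ≤ ((2 * n + B : ℕ) : ℝ) := by
      have : K ≤ 2 * n + B := by omega
      exact_mod_cast this
    calc 2 * M / ‖c p‖ ≤ (K : ℝ) := h1
      _ ≤ ((2 * n + B : ℕ) : ℝ) := h2
      _ = ((ι n : ℕ+) : ℝ) := by norm_cast
  have hs1 : Summable (fun n : ℕ => ‖x (ι n)‖ ^ 2 * ((ι n : ℕ+) : ℝ) ^ (2 * θ)) :=
    hx.comp_injective hιinj
  set C : ℝ := (‖c p‖ / 2) ^ 2 with hC
  have hC0 : 0 < C := by positivity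
  have hbound : ∀ n : ℕ, C * (((ι n : ℕ+) : ℝ))⁻¹
      ≤ ‖x (ι n)‖ ^ 2 * ((ι n : ℕ+) : ℝ) ^ (2 * θ) :=
    fun n => key2 (ι n) (hιr n) (hιK n)
  -- Summability of the inverses of the subsequence
  have hs2 : Summable (fun n : ℕ => (((ι n : ℕ+) : ℝ))⁻¹) := by
    apply Summable.of_nonneg_of_le (fun n => by positivity)
      (fun n => ?_) (hs1.mul_left C⁻¹)
    have e : (((ι n : ℕ+) : ℝ))⁻¹ = C⁻¹ * (C * (((ι n : ℕ+) : ℝ))⁻¹) := by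
      field_simp
    rw [e]
    exact mul_le_mul_of_nonneg_left (hbound n) (by positivity)
  -- Hence 1/(n+1) is summable, contradiction
  have hs3 : Summable (fun n : ℕ => ((n : ℝ) + 1)⁻¹) := by
    apply Summable.of_nonneg_of_le (fun n => by positivity)
      (fun n => ?_) (hs2.mul_left (B : ℝ))
    have hι2 : ((ι n : ℕ+) : ℝ) = ((2 * n + B : ℕ) : ℝ) := by norm_cast
    have hB2 : (2 : ℕ) ≤ B := by omega
    have hle : ((2 * n + B : ℕ) : ℝ) ≤ (B : ℝ) * ((n : ℝ) + 1) := by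
      have h : (2 * n + B : ℕ) ≤ B * (n + 1) := by nlinarith [hB2]
      exact_mod_cast h
    have hpos : (0 : ℝ) < ((2 * n + B : ℕ) : ℝ) := by
      have := hBpos n; exact_mod_cast this
    have hB0 : (0 : ℝ) < (B : ℝ) := by
      have : 0 < B := by omega
      exact_mod_cast this
    have hpos2 : (0 : ℝ) < (n : ℝ) + 1 := by positivity
    rw [hι2]
    have hinv : ((B : ℝ) * ((n : ℝ) + 1))⁻¹ ≤ (((2 * n + B : ℕ) : ℝ))⁻¹ :=
      inv_anti₀ hpos hle
    calc ((n : ℝ) + 1)⁻¹ = (B : ℝ) * ((B : ℝ) * ((n : ℝ) + 1))⁻¹ := by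
          field_simp
      _ ≤ (B : ℝ) * (((2 * n + B : ℕ) : ℝ))⁻¹ :=
          mul_le_mul_of_nonneg_left hinv hB0.le
  have hs4 : Summable (fun n : ℕ => ((n : ℝ))⁻¹) := by
    rw [← summable_nat_add_iff 1]
    simpa using hs3
  exact Real.not_summable_natCast_inv hs4
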